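/- For the powerset monad P on Sets, whose algebras are complete lattices with join, a complete lattice L carries a coalgebra structure b : L → P(L) for the induced comonad P̄ on complete lattices (i.e., a join-preserving map with ⋁ b(x) = x and {{y} : y ∈ b(x)} = {b(y) : y ∈ b(x)}) if and only if L is atomic; in that case b(x) is necessarily the set of atoms below x. -/
import Mathlib


/-- An atom of a complete lattice in the sense of the paper: a non-zero element with no
non-zero elements strictly below it, satisfying `a ≤ ⋁ U → ∃ x ∈ U, a ≤ x`. -/
def PaperAtom {L : Type u} [CompleteLattice L] (a : L) : Prop :=
  a ≠ ⊥ ∧ (∀ x : L, x < a → x = ⊥) ∧ ∀ U : Set L, a ≤ sSup U → ∃ x ∈ U, a ≤ x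

lemma coalg_eq_atoms {L : Type u} [CompleteLattice L] (b : L → Set L)
    (h1 : ∀ S : Set L, b (sSup S) = ⋃ x ∈ S, b x)
    (h2 : ∀ x : L, sSup (b x) = x)
    (h3 : ∀ x : L, (fun y => ({y} : Set L)) '' b x = b '' b x) :
    ∀ x : L, b x = {a | PaperAtom a ∧ a ≤ x} := by
  have hbot : b ⊥ = ∅ := by simpa using h1 ∅
  have hmono : ∀ u v : L, u ≤ v → b u ⊆ b v := by
    intro u v huv
    have h := h1 {u, v}
    have hs : sSup ({u, v} : Set L) = v := by
      rw [sSup_pair, sup_eq_right.mpr huv]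
    rw [hs] at h
    intro z hz
    rw [h]
    exact Set.mem_biUnion (by simp) hz
  have hsing : ∀ x : L, ∀ y ∈ b x, b y = {y} := by
    intro x y hy
    have hmem : ({y} : Set L) ∈ (fun y => ({y} : Set L)) '' b x := ⟨y, hy, rfl⟩
    rw [h3 x] at hmem
    obtain ⟨z, _, hbz⟩ := hmem
    have hzy : z = y := by
      have h := h2 z
      rw [hbz] at h
      simpa using h.symm
    subst hzy; exact hbz
  have hatom : ∀ x : L, ∀ y ∈ b x, PaperAtom y := by
    intro x y hy
    have hby := hsing x y hy
    refine ⟨?_, ?_, ?_⟩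
    · intro hYbot
      rw [hYbot, hbot] at hby
      exact (Set.singleton_ne_empty (⊥ : L)) hby.symm
    · intro z hz
      have hsub : b z ⊆ {y} := hby ▸ hmono z y hz.le
      rcases Set.subset_singleton_iff_eq.mp hsub with h | h
      · rw [← h2 z, h, sSup_empty]
      · exfalso
        have : z = y := by rw [← h2 z, h]; simp
        exact hz.ne this
    · intro U hU
      have hmem : y ∈ b (sSup U) := by
        have : y ∈ b y := by rw [hby]; rfl
        exact hmono y (sSup U) hU this
      rw [h1] at hmem
      obtain ⟨x0, hx0, hyx0⟩ := Set.mem_iUnion₂.mp hmem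
      exact ⟨x0, hx0, (h2 x0) ▸ le_sSup hyx0⟩
  intro x
  ext a
  constructor
  · intro ha
    exact ⟨hatom x a ha, (h2 x) ▸ le_sSup ha⟩
  · rintro ⟨⟨hne, hmin, hsup⟩, hax⟩
    have h : a ≤ sSup (b x) := by rw [h2]; exact hax
    obtain ⟨z, hz, haz⟩ := hsup (b x) h
    have hzat := hatom x z hz
    have : a = z := by
      rcases lt_or_eq_of_le haz with h' | h'
      · exact absurd (hzat.2.1 a h') hne
      · exact h'
    rwa [this]

theorem bases_as_coalgebras_stmt6 {L : Type u} [CompleteLattice L] :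
    ((∃ b : L → Set L,
        (∀ S : Set L, b (sSup S) = ⋃ x ∈ S, b x) ∧
        (∀ x : L, sSup (b x) = x) ∧
        (∀ x : L, (fun y => ({y} : Set L)) '' b x = b '' b x)) ↔
      (∀ x : L, x = sSup {a | PaperAtom a ∧ a ≤ x})) ∧
    (∀ b : L → Set L,
      (∀ S : Set L, b (sSup S) = ⋃ x ∈ S, b x) →
      (∀ x : L, sSup (b x) = x) →
      (∀ x : L, (fun y => ({y} : Set L)) '' b x = b '' b x) →
      ∀ x : L, b x = {a | PaperAtom a ∧ a ≤ x}) := by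
  constructor
  · constructor
    · rintro ⟨b, h1, h2, h3⟩ x
      rw [← coalg_eq_atoms b h1 h2 h3 x, h2]
    · intro hAtomic
      refine ⟨fun x => {a | PaperAtom a ∧ a ≤ x}, ?_, ?_, ?_⟩
      · intro S
        ext a
        simp only [Set.mem_setOf_eq, Set.mem_iUnion]
        constructor
        · rintro ⟨ha, hle⟩
          obtain ⟨x, hx, hax⟩ := ha.2.2 S hle
          exact ⟨x, hx, ha, hax⟩
        · rintro ⟨x, hx, ha, hax⟩
          exact ⟨ha, hax.trans (le_sSup hx)⟩
      · intro x; exact (hAtomic x).symm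
      · intro x
        apply Set.image_congr
        rintro a ⟨ha, _⟩
        ext z
        simp only [Set.mem_singleton_iff, Set.mem_setOf_eq]
        constructor
        · rintro rfl; exact ⟨ha, le_rfl⟩
        · rintro ⟨hz, hza⟩
          rcases lt_or_eq_of_le hza with h' | h'
          · exact absurd (ha.2.1 z h') hz.1
          · exact h'
  · exact coalg_eq_atoms
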